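/- Let $p$ be a prime and $R$ a normal domain with algebraically closed fraction field in which $p \neq 0$. Then there exists $\pi \in R$ with $\pi^p = p$, and the Frobenius map $x \mapsto x^p$ induces a bijection $R/\pi R \to R/pR$. Consequently the $p$-adic completion of $R$ is a perfectoid ring. -/

import Mathlib

universe u

/-- The elementwise formulation that the Frobenius `x ↦ x ^ p` induces a bijection
`S/πS → S/pS`: surjectivity and injectivity of the induced map. -/
def FrobeniusBijective (p : ℕ) {S : Type u} [CommRing S] (π : S) : Prop :=
  (∀ x : S, ∃ y : S, x - y ^ p ∈ Ideal.span {(p : S)}) ∧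
  (∀ x : S, x ^ p ∈ Ideal.span {(p : S)} → x ∈ Ideal.span {π})

/-- The definition of a perfectoid ring taken in the context of Statement 9. -/
def IsPerfectoidOfPrime (p : ℕ) (S : Type u) [CommRing S] : Prop :=
  ∃ π : S, (∃ u : Sˣ, π ^ p = (p : S) * u) ∧ FrobeniusBijective p π

section Aux

variable {p : ℕ} {R : Type u} [CommRing R] [IsDomain R] [IsIntegrallyClosed R]
  [IsAlgClosed (FractionRing R)]

theorem aux_exists_pow_root (hp : p.Prime) (a : R) : ∃ b : R, b ^ p = a := by
  have hK : Function.Injective (algebraMap R (FractionRing R)) :=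
    IsFractionRing.injective R (FractionRing R)
  obtain ⟨t, ht⟩ := IsAlgClosed.exists_root
    (Polynomial.X ^ p - Polynomial.C (algebraMap R (FractionRing R) a))
    (by rw [Polynomial.degree_X_pow_sub_C hp.pos]; exact_mod_cast hp.ne_zero)
  have ht' : t ^ p = algebraMap R (FractionRing R) a := by
    have := ht
    simp only [Polynomial.IsRoot, Polynomial.eval_sub, Polynomial.eval_pow,
      Polynomial.eval_X, Polynomial.eval_C, sub_eq_zero] at this
    exact this
  have hint : IsIntegral R t := by
    refine ⟨Polynomial.X ^ p - Polynomial.C a, Polynomial.monic_X_pow_sub_C a hp.ne_zero, ?_⟩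
    simp [Polynomial.eval₂_sub, ht']
  obtain ⟨b, hb⟩ := IsIntegrallyClosed.isIntegral_iff.mp hint
  exact ⟨b, hK (by rw [map_pow, hb, ht'])⟩

theorem aux_dvd_of_pow_eq_pow (hp : p.Prime) {a b : R} (h : a ^ p = b ^ p) : b ∣ a := by
  by_cases hb : b = 0
  · subst hb
    rw [zero_pow hp.ne_zero, pow_eq_zero_iff hp.ne_zero] at h
    simp [h]
  · have hK : Function.Injective (algebraMap R (FractionRing R)) :=
      IsFractionRing.injective R (FractionRing R)
    have hfb : algebraMap R (FractionRing R) b ≠ 0 := fun hc => hb (hK (by rw [hc, map_zero]))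
    set c : FractionRing R :=
      algebraMap R (FractionRing R) a / algebraMap R (FractionRing R) b with hc
    have hcp : c ^ p = 1 := by
      rw [hc, div_pow, ← map_pow, ← map_pow, h, div_self (by exact_mod_cast pow_ne_zero p hfb)]
    have hint : IsIntegral R c := by
      refine ⟨Polynomial.X ^ p - Polynomial.C 1, Polynomial.monic_X_pow_sub_C 1 hp.ne_zero, ?_⟩
      simp [Polynomial.eval₂_sub, hcp]
    obtain ⟨r, hr⟩ := IsIntegrallyClosed.isIntegral_iff.mp hint
    refine ⟨r, hK ?_⟩
    rw [map_mul, hr, hc, mul_div_cancel₀ _ hfb]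

theorem aux_pi_dvd (hp : p.Prime) {π : R} (hπ : π ^ p = (p : R)) {x : R}
    (hx : (p : R) ∣ x ^ p) : π ∣ x := by
  obtain ⟨t, ht⟩ := hx
  obtain ⟨s, hs⟩ := aux_exists_pow_root hp t
  have h : x ^ p = (π * s) ^ p := by rw [mul_pow, hπ, hs, ht]
  exact dvd_trans ⟨s, rfl⟩ (aux_dvd_of_pow_eq_pow hp h)

theorem aux_mem_iff (n : ℕ) (x : R) :
    x ∈ ((Ideal.span {(p : R)}) ^ n • ⊤ : Submodule R R) ↔ (p : R) ^ n ∣ x := by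
  have h : ((Ideal.span {(p : R)}) ^ n • ⊤ : Ideal R) = (Ideal.span {(p : R)}) ^ n := by
    ext y; simp
  rw [h, Ideal.span_singleton_pow, Ideal.mem_span_singleton]


theorem aux_mk_eq {I : Ideal R} (f g : AdicCompletion.AdicCauchySequence I R)
    (h : ∀ n, f.val n - g.val n ∈ (I ^ n • ⊤ : Submodule R R)) :
    AdicCompletion.mk I R f = AdicCompletion.mk I R g := by
  ext n
  simp only [AdicCompletion.mk_apply_coe, Submodule.mkQ_apply]
  exact (Submodule.Quotient.eq _).mpr (h n)

theorem aux_smul_val {I : Ideal R} (r : R) (g : AdicCompletion.AdicCauchySequence I R) (n : ℕ) :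
    (r • g).val n = r * g.val n := rfl

theorem aux_p_dvd_completion (hpR : (p : R) ≠ 0)
    (f : AdicCompletion.AdicCauchySequence (Ideal.span {(p : R)}) R)
    (h0 : (p : R) ∣ f.val 1) :
    ∃ w, AdicCompletion.mk (Ideal.span {(p : R)}) R f
      = (p : AdicCompletion (Ideal.span {(p : R)}) R) * w := by
  have hdvd : ∀ n : ℕ, ∃ c : R, f.val (n + 1) = (p : R) * c := by
    intro n
    have h1 := f.property (show 1 ≤ n + 1 by omega)
    rw [SModEq.sub_mem] at h1
    rw [aux_mem_iff 1 _, pow_one] at h1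
    obtain ⟨d, hd⟩ := dvd_sub h0 h1
    refine ⟨d, ?_⟩
    rw [← hd]; ring
  choose c hc using hdvd
  have hcauchy : AdicCompletion.IsAdicCauchy (Ideal.span {(p : R)}) R c := by
    intro m n hmn
    rw [SModEq.sub_mem, aux_mem_iff m]
    have h1 := f.property (show m + 1 ≤ n + 1 by omega)
    rw [SModEq.sub_mem, aux_mem_iff (m + 1)] at h1
    rw [hc m, hc n, ← mul_sub, pow_succ'] at h1
    exact (mul_dvd_mul_iff_left hpR).mp h1
  refine ⟨AdicCompletion.mk (Ideal.span {(p : R)}) R ⟨c, @hcauchy⟩, ?_⟩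
  have h1 : (p : AdicCompletion (Ideal.span {(p : R)}) R)
        * AdicCompletion.mk (Ideal.span {(p : R)}) R ⟨c, @hcauchy⟩
      = AdicCompletion.mk (Ideal.span {(p : R)}) R ((p : R) • ⟨c, @hcauchy⟩) := by
    rw [show ((p : AdicCompletion (Ideal.span {(p : R)}) R))
        = algebraMap R (AdicCompletion (Ideal.span {(p : R)}) R) (p : R)
        from (map_natCast _ p).symm, ← Algebra.smul_def]
    exact (map_smul _ _ _).symm
  rw [h1]
  apply aux_mk_eq
  intro n
  erw [aux_smul_val]
  show f.val n - (p : R) * c n ∈ _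
  rw [← hc n]
  have h2 := f.property (show n ≤ n + 1 by omega)
  rwa [SModEq.sub_mem] at h2

theorem aux_pi_dvd_completion (hp : p.Prime) (hpR : (p : R) ≠ 0)
    {π : R} (hπ : π ^ p = (p : R))
    (f : AdicCompletion.AdicCauchySequence (Ideal.span {(p : R)}) R)
    (g : AdicCompletion.AdicCauchySequence (Ideal.span {(p : R)}) R)
    (hfg : (AdicCompletion.mk (Ideal.span {(p : R)}) R f) ^ p
      = (p : AdicCompletion (Ideal.span {(p : R)}) R)
          * AdicCompletion.mk (Ideal.span {(p : R)}) R g) :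
    ∃ w, AdicCompletion.mk (Ideal.span {(p : R)}) R f
      = algebraMap R (AdicCompletion (Ideal.span {(p : R)}) R) π * w := by
  have hπ0 : π ≠ 0 := by
    intro h
    exact hpR (by rw [← hπ, h, zero_pow hp.ne_zero])
  have hcomp : ∀ n : ℕ, (p : R) ^ n ∣ (f.val n) ^ p - (p : R) * g.val n := by
    intro n
    have h1 : ((AdicCompletion.mk (Ideal.span {(p : R)}) R f) ^ p).val n
        = (((p : AdicCompletion (Ideal.span {(p : R)}) R))
            * AdicCompletion.mk (Ideal.span {(p : R)}) R g).val n := by rw [hfg]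
    have h2 : ((AdicCompletion.mk (Ideal.span {(p : R)}) R f) ^ p).val n
        = Submodule.Quotient.mk (p := ((Ideal.span {(p : R)}) ^ n • ⊤ : Submodule R R))
            ((f.val n) ^ p) := by
      have h : (AdicCompletion.mk (Ideal.span {(p : R)}) R f) ^ p
          = AdicCompletion.mk (Ideal.span {(p : R)}) R (f ^ p) :=
        (map_pow (AdicCompletion.mkₐ (Ideal.span {(p : R)})) f p).symm
      rw [h]; rfl
    have h3 : (((p : AdicCompletion (Ideal.span {(p : R)}) R))
          * AdicCompletion.mk (Ideal.span {(p : R)}) R g).val n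
        = Submodule.Quotient.mk (p := ((Ideal.span {(p : R)}) ^ n • ⊤ : Submodule R R))
            ((p : R) * g.val n) := by
      have h : ((p : AdicCompletion (Ideal.span {(p : R)}) R))
            * AdicCompletion.mk (Ideal.span {(p : R)}) R g
          = AdicCompletion.mk (Ideal.span {(p : R)}) R ((p : R) • g) := by
        rw [show ((p : AdicCompletion (Ideal.span {(p : R)}) R))
            = algebraMap R (AdicCompletion (Ideal.span {(p : R)}) R) (p : R)
            from (map_natCast _ p).symm, ← Algebra.smul_def, ← map_smul]
      rw [h]
      have h4 : ((p : R) • g).val n = (p : R) * g.val n := rfl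
      show Submodule.Quotient.mk (((p : R) • g).val n) = _
      rw [h4]
    rw [h2, h3, Submodule.Quotient.eq] at h1
    rwa [aux_mem_iff n] at h1
  have hdvd : ∀ n : ℕ, ∃ s : R, f.val (n + 1) = π * s := by
    intro n
    have h1 := hcomp (n + 1)
    have h2 : (p : R) ∣ (f.val (n + 1)) ^ p := by
      have hpn : (p : R) ∣ (p : R) ^ (n + 1) := dvd_pow_self _ (by omega)
      have h5 := dvd_add (hpn.trans h1) (Dvd.intro (g.val (n + 1)) rfl)
      rwa [sub_add_cancel] at h5
    obtain ⟨s, hs⟩ := aux_pi_dvd hp hπ h2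
    exact ⟨s, hs⟩
  choose s hs using hdvd
  have hcancel : ∀ (m : ℕ) (d : R), (p : R) ^ (m + 1) ∣ π * d → (p : R) ^ m ∣ d := by
    intro m d hd
    rw [← hπ, ← pow_mul] at hd
    have h1 : π ^ (p * m + 1) ∣ π * d :=
      dvd_trans (pow_dvd_pow π (by have := hp.pos; rw [Nat.mul_add, Nat.mul_one]; omega)) hd
    rw [pow_succ'] at h1
    have h2 : π ^ (p * m) ∣ d := (mul_dvd_mul_iff_left hπ0).mp h1
    rwa [pow_mul, hπ] at h2
  have hcauchy : AdicCompletion.IsAdicCauchy (Ideal.span {(p : R)}) R s := by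
    intro m n hmn
    rw [SModEq.sub_mem, aux_mem_iff m]
    have h1 := f.property (show m + 1 ≤ n + 1 by omega)
    rw [SModEq.sub_mem, aux_mem_iff (m + 1)] at h1
    rw [hs m, hs n, ← mul_sub] at h1
    exact hcancel m _ h1
  refine ⟨AdicCompletion.mk (Ideal.span {(p : R)}) R ⟨s, @hcauchy⟩, ?_⟩
  have h1 : algebraMap R (AdicCompletion (Ideal.span {(p : R)}) R) π
        * AdicCompletion.mk (Ideal.span {(p : R)}) R ⟨s, @hcauchy⟩
      = AdicCompletion.mk (Ideal.span {(p : R)}) R (π • ⟨s, @hcauchy⟩) := by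
    rw [← Algebra.smul_def]
    exact (map_smul _ _ _).symm
  rw [h1]
  apply aux_mk_eq
  intro n
  erw [aux_smul_val]
  show f.val n - π * s n ∈ _
  rw [← hs n]
  have h2 := f.property (show n ≤ n + 1 by omega)
  rwa [SModEq.sub_mem] at h2

end Aux

theorem frobenius_bijective_and_completion_perfectoid
    (p : ℕ) (hp : p.Prime)
    (R : Type u) [CommRing R] [IsDomain R] [IsIntegrallyClosed R]
    [IsAlgClosed (FractionRing R)] (hpR : (p : R) ≠ 0) :
    (∃ π : R, π ^ p = (p : R) ∧ FrobeniusBijective p π) ∧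
    IsPerfectoidOfPrime p (AdicCompletion (Ideal.span {(p : R)}) R) := by
  obtain ⟨π, hπ⟩ := aux_exists_pow_root hp ((p : R))
  refine ⟨⟨π, hπ, ?_, ?_⟩,
    algebraMap R (AdicCompletion (Ideal.span {(p : R)}) R) π, ⟨1, ?_⟩, ?_, ?_⟩
  · -- surjectivity over R
    intro x
    obtain ⟨y, hy⟩ := aux_exists_pow_root hp x
    exact ⟨y, by rw [hy, sub_self]; exact Ideal.zero_mem _⟩
  · -- injectivity over R
    intro x hx
    rw [Ideal.mem_span_singleton] at hx ⊢
    exact aux_pi_dvd hp hπ hx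
  · -- π ^ p = p * 1 in the completion
    rw [Units.val_one, mul_one, ← map_pow, hπ, map_natCast]
  · -- surjectivity in the completion
    intro x
    obtain ⟨f, rfl⟩ := AdicCompletion.mk_surjective (Ideal.span {(p : R)}) R x
    obtain ⟨b, hb⟩ := aux_exists_pow_root hp (f.val 1)
    refine ⟨algebraMap R (AdicCompletion (Ideal.span {(p : R)}) R) b, ?_⟩
    have h1 : AdicCompletion.mk (Ideal.span {(p : R)}) R f
          - (algebraMap R (AdicCompletion (Ideal.span {(p : R)}) R) b) ^ p
        = AdicCompletion.mk (Ideal.span {(p : R)}) R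
            (f - algebraMap R (AdicCompletion.AdicCauchySequence (Ideal.span {(p : R)}) R) (b ^ p)) := by
      rw [map_sub, ← map_pow]
      congr 1
    rw [h1]
    have h0 : (p : R) ∣ (f - algebraMap R
        (AdicCompletion.AdicCauchySequence (Ideal.span {(p : R)}) R) (b ^ p)).val 1 := by
      have h4 : (f - algebraMap R
          (AdicCompletion.AdicCauchySequence (Ideal.span {(p : R)}) R) (b ^ p)).val 1
          = f.val 1 - b ^ p := rfl
      rw [h4, hb, sub_self]
      exact dvd_zero _
    obtain ⟨w, hw⟩ := aux_p_dvd_completion hpR _ h0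
    rw [hw, Ideal.mem_span_singleton]
    exact Dvd.intro w rfl
  · -- injectivity in the completion
    intro x hx
    obtain ⟨f, rfl⟩ := AdicCompletion.mk_surjective (Ideal.span {(p : R)}) R x
    rw [Ideal.mem_span_singleton] at hx
    obtain ⟨y, hy⟩ := hx
    obtain ⟨g, rfl⟩ := AdicCompletion.mk_surjective (Ideal.span {(p : R)}) R y
    obtain ⟨w, hw⟩ := aux_pi_dvd_completion hp hpR hπ f g hy
    rw [hw, Ideal.mem_span_singleton]
    exact Dvd.intro w rfl
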